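/- Let λ > c > 0. Then the relative error in the reversed failure rate of a series system under the Marshall–Olkin multivariate exponential model, E^μ(t) = (λ/c)·((e^{ct} − 1)/(e^{λt} − 1)) − 1, is decreasing in t on (0,∞) and satisfies −1 < E^μ(t) < 0 for every t > 0. -/

import Mathlib

lemma exp_mul_hasDerivAt (a x : ℝ) :
    HasDerivAt (fun t : ℝ => Real.exp (a * t)) (a * Real.exp (a * x)) x := by
  simpa [mul_comm, Function.comp_def] using (Real.hasDerivAt_exp (a * x)).comp x ((hasDerivAt_id x).const_mul a)

lemma key (a b : ℝ) (hb : 0 < b) (hba : b < a) :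
    ∀ t : ℝ, 0 < t → 0 < b * Real.exp (a * t) - a * Real.exp (b * t) + (a - b) := by
  have hmono : StrictMonoOn
      (fun t : ℝ => b * Real.exp (a * t) - a * Real.exp (b * t) + (a - b)) (Set.Ici 0) := by
    apply strictMonoOn_of_deriv_pos (convex_Ici 0)
    · fun_prop
    · intro x hx
      rw [interior_Ici] at hx
      have hd : HasDerivAt
          (fun t : ℝ => b * Real.exp (a * t) - a * Real.exp (b * t) + (a - b))
          (b * (a * Real.exp (a * x)) - a * (b * Real.exp (b * x))) x := by
        simpa using (((exp_mul_hasDerivAt a x).const_mul b).sub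
          ((exp_mul_hasDerivAt b x).const_mul a)).add_const (a - b)
      rw [hd.deriv]
      have hexp : Real.exp (b * x) < Real.exp (a * x) :=
        Real.exp_lt_exp.2 (by nlinarith [hx.out])
      nlinarith [mul_pos (mul_pos hb (hb.trans hba)) (sub_pos.2 hexp)]
  intro t ht
  have h0 := hmono (Set.self_mem_Ici) (Set.mem_Ici.2 ht.le) ht
  simpa using h0

lemma keyA (lam c : ℝ) (hc : 0 < c) (hcl : c < lam) (t : ℝ) (ht : 0 < t) :
    c * Real.exp (c * t) * (Real.exp (lam * t) - 1)
      < lam * Real.exp (lam * t) * (Real.exp (c * t) - 1) := by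
  have h := key lam (lam - c) (by linarith) (by linarith) t ht
  have hsplit : Real.exp (lam * t) = Real.exp ((lam - c) * t) * Real.exp (c * t) := by
    rw [← Real.exp_add]; ring_nf
  have hec := Real.exp_pos (c * t)
  have hel := Real.exp_pos ((lam - c) * t)
  nlinarith [mul_pos hec hel, h, hec]

/-- for `λ > c > 0`, the relative error in the reversed failure rate
of the Marshall–Olkin multivariate exponential series system,
`E^μ(t) = (λ/c)((e^{ct}−1)/(e^{λt}−1)) − 1`, is decreasing on `(0,∞)` and
satisfies `−1 < E^μ(t) < 0` for every `t > 0`. -/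
theorem stmt_16 (lam c : ℝ) (hc : 0 < c) (hcl : c < lam) :
    StrictAntiOn
      (fun t : ℝ => (lam / c) * ((Real.exp (c * t) - 1) / (Real.exp (lam * t) - 1)) - 1)
      (Set.Ioi 0) ∧
    ∀ t : ℝ, 0 < t →
      -1 < (lam / c) * ((Real.exp (c * t) - 1) / (Real.exp (lam * t) - 1)) - 1 ∧
      (lam / c) * ((Real.exp (c * t) - 1) / (Real.exp (lam * t) - 1)) - 1 < 0 := by
  have hlam : 0 < lam := hc.trans hcl
  have hden : ∀ t : ℝ, 0 < t → 0 < Real.exp (lam * t) - 1 := by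
    intro t ht
    have : (1 : ℝ) < Real.exp (lam * t) := by
      rw [← Real.exp_zero]; exact Real.exp_lt_exp.2 (by positivity)
    linarith
  have hnum : ∀ t : ℝ, 0 < t → 0 < Real.exp (c * t) - 1 := by
    intro t ht
    have : (1 : ℝ) < Real.exp (c * t) := by
      rw [← Real.exp_zero]; exact Real.exp_lt_exp.2 (by positivity)
    linarith
  constructor
  · apply strictAntiOn_of_deriv_neg (convex_Ioi 0)
    · apply ContinuousOn.sub _ continuousOn_const
      apply ContinuousOn.mul continuousOn_const
      apply ContinuousOn.div
      · fun_prop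
      · fun_prop
      · intro t ht
        exact ne_of_gt (hden t ht)
    · intro x hx
      rw [interior_Ioi] at hx
      have hdx := hden x hx
      have hd : HasDerivAt
          (fun t : ℝ => (lam / c) * ((Real.exp (c * t) - 1) / (Real.exp (lam * t) - 1)) - 1)
          ((lam / c) * ((c * Real.exp (c * x) * (Real.exp (lam * x) - 1)
            - (Real.exp (c * x) - 1) * (lam * Real.exp (lam * x)))
            / (Real.exp (lam * x) - 1) ^ 2)) x := by
        have hu : HasDerivAt (fun t : ℝ => Real.exp (c * t) - 1) (c * Real.exp (c * x)) x := by
          simpa using (exp_mul_hasDerivAt c x).sub_const 1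
        have hv : HasDerivAt (fun t : ℝ => Real.exp (lam * t) - 1)
            (lam * Real.exp (lam * x)) x := by
          simpa using (exp_mul_hasDerivAt lam x).sub_const 1
        exact ((hu.div hv (ne_of_gt hdx)).const_mul (lam / c)).sub_const 1
      rw [hd.deriv]
      have hA := keyA lam c hc hcl x hx
      have h1 : c * Real.exp (c * x) * (Real.exp (lam * x) - 1)
          - (Real.exp (c * x) - 1) * (lam * Real.exp (lam * x)) < 0 := by nlinarith
      have h2 : (0 : ℝ) < lam / c := by positivity
      have h3 : (0 : ℝ) < (Real.exp (lam * x) - 1) ^ 2 := by positivity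
      exact mul_neg_of_pos_of_neg h2 (div_neg_of_neg_of_pos h1 h3)
  · intro t ht
    have hdt := hden t ht
    have hnt := hnum t ht
    constructor
    · have : 0 < (lam / c) * ((Real.exp (c * t) - 1) / (Real.exp (lam * t) - 1)) := by positivity
      linarith
    · rw [sub_neg]
      have hkey := key lam c hc hcl t ht
      rw [div_mul_div_comm, div_lt_one (by positivity)]
      nlinarith
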